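/- With L₁ = λ(u_{1 2̄}D_{1̄} − u_{1 1̄}D_{2̄}) and L₂ = λ(u_{2 2̄}D_{1̄} − u_{2 1̄}D_{2̄}) acting on smooth functions of (z₁, z̄₁, z₂, z̄₂), the operator identity D₁L₂ − D₂L₁ = L₂D₁ − L₁D₂ holds, where D₁, D₂ are partial derivative operators in z₁, z₂. -/

import Mathlib

noncomputable section

/-- Functions of the four independent complex variables (z₁, z̄₁, z₂, z̄₂). -/
abbrev F4 := ℂ → ℂ → ℂ → ℂ → ℂ

/-- Partial derivative in the 1st slot (z₁, resp. q). -/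
def D1 (f : F4) : F4 := fun a b c d => deriv (fun t => f t b c d) a
/-- Partial derivative in the 2nd slot (z̄₁, resp. q̄). -/
def D2 (f : F4) : F4 := fun a b c d => deriv (fun t => f a t c d) b
/-- Partial derivative in the 3rd slot (z₂, resp. z). -/
def D3 (f : F4) : F4 := fun a b c d => deriv (fun t => f a b t d) c
/-- Partial derivative in the 4th slot (z̄₂, resp. z̄). -/
def D4 (f : F4) : F4 := fun a b c d => deriv (fun t => f a b c t) d

/-- Smoothness of a function of the four complex variables. -/
def Sm (f : F4) : Prop :=
  ContDiff ℂ ⊤ (fun p : ℂ × ℂ × ℂ × ℂ => f p.1 p.2.1 p.2.2.1 p.2.2.2)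

/-- The operator L₁ = λ(u_{1 2̄} D_{1̄} − u_{1 1̄} D_{2̄}). -/
def opL1 (lam : ℂ) (u : F4) (φ : F4) : F4 := fun a b c d =>
  lam * (D4 (D1 u) a b c d * D2 φ a b c d - D2 (D1 u) a b c d * D4 φ a b c d)

/-- The operator L₂ = λ(u_{2 2̄} D_{1̄} − u_{2 1̄} D_{2̄}). -/
def opL2 (lam : ℂ) (u : F4) (φ : F4) : F4 := fun a b c d =>
  lam * (D4 (D3 u) a b c d * D2 φ a b c d - D2 (D3 u) a b c d * D4 φ a b c d)

namespace PartnerAux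

abbrev E4 := ℂ × ℂ × ℂ × ℂ

/-- Uncurried version of a function of four variables. -/
def unc (f : F4) : E4 → ℂ := fun p => f p.1 p.2.1 p.2.2.1 p.2.2.2

/-- Directional derivative in direction `v`. -/
def Dv (v : E4) (f : F4) : F4 := fun a b c d => fderiv ℂ (unc f) (a, b, c, d) v

lemma Sm_Dv (v : E4) {f : F4} (hf : Sm f) : Sm (Dv v f) := by
  have h : ContDiff ℂ ⊤ (fun p : E4 => fderiv ℂ (unc f) p v) :=
    (hf.fderiv_right (m := ⊤) le_top).clm_apply contDiff_const
  exact h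

lemma hasDeriv_slot1 {f : F4} (hf : Sm f) (a b c d : ℂ) :
    HasDerivAt (fun t => f t b c d) (Dv (1, 0, 0, 0) f a b c d) a := by
  have hline : HasDerivAt (fun t : ℂ => ((t, b, c, d) : E4)) ((1, 0, 0, 0) : E4) a :=
    (hasDerivAt_id a).prodMk ((hasDerivAt_const a b).prodMk
      ((hasDerivAt_const a c).prodMk (hasDerivAt_const a d)))
  exact ((hf.differentiable (by simp) (a, b, c, d)).hasFDerivAt).comp_hasDerivAt a hline

lemma hasDeriv_slot2 {f : F4} (hf : Sm f) (a b c d : ℂ) :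
    HasDerivAt (fun t => f a t c d) (Dv (0, 1, 0, 0) f a b c d) b := by
  have hline : HasDerivAt (fun t : ℂ => ((a, t, c, d) : E4)) ((0, 1, 0, 0) : E4) b :=
    (hasDerivAt_const b a).prodMk ((hasDerivAt_id b).prodMk
      ((hasDerivAt_const b c).prodMk (hasDerivAt_const b d)))
  exact ((hf.differentiable (by simp) (a, b, c, d)).hasFDerivAt).comp_hasDerivAt b hline

lemma hasDeriv_slot3 {f : F4} (hf : Sm f) (a b c d : ℂ) :
    HasDerivAt (fun t => f a b t d) (Dv (0, 0, 1, 0) f a b c d) c := by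
  have hline : HasDerivAt (fun t : ℂ => ((a, b, t, d) : E4)) ((0, 0, 1, 0) : E4) c :=
    (hasDerivAt_const c a).prodMk ((hasDerivAt_const c b).prodMk
      ((hasDerivAt_id c).prodMk (hasDerivAt_const c d)))
  exact ((hf.differentiable (by simp) (a, b, c, d)).hasFDerivAt).comp_hasDerivAt c hline

lemma hasDeriv_slot4 {f : F4} (hf : Sm f) (a b c d : ℂ) :
    HasDerivAt (fun t => f a b c t) (Dv (0, 0, 0, 1) f a b c d) d := by
  have hline : HasDerivAt (fun t : ℂ => ((a, b, c, t) : E4)) ((0, 0, 0, 1) : E4) d :=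
    (hasDerivAt_const d a).prodMk ((hasDerivAt_const d b).prodMk
      ((hasDerivAt_const d c).prodMk (hasDerivAt_id d)))
  exact ((hf.differentiable (by simp) (a, b, c, d)).hasFDerivAt).comp_hasDerivAt d hline

lemma D1_eq {f : F4} (hf : Sm f) : D1 f = Dv (1, 0, 0, 0) f := by
  funext a b c d; exact (hasDeriv_slot1 hf a b c d).deriv

lemma D2_eq {f : F4} (hf : Sm f) : D2 f = Dv (0, 1, 0, 0) f := by
  funext a b c d; exact (hasDeriv_slot2 hf a b c d).deriv

lemma D3_eq {f : F4} (hf : Sm f) : D3 f = Dv (0, 0, 1, 0) f := by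
  funext a b c d; exact (hasDeriv_slot3 hf a b c d).deriv

lemma D4_eq {f : F4} (hf : Sm f) : D4 f = Dv (0, 0, 0, 1) f := by
  funext a b c d; exact (hasDeriv_slot4 hf a b c d).deriv

lemma Dv_comm {f : F4} (hf : Sm f) (v w : E4) : Dv v (Dv w f) = Dv w (Dv v f) := by
  have hd : Differentiable ℂ (unc f) := hf.differentiable (by simp)
  have hfd : ContDiff ℂ ⊤ (fderiv ℂ (unc f)) := hf.fderiv_right (m := ⊤) le_top
  funext a b c d
  set p : E4 := (a, b, c, d) with hp
  have hD : HasFDerivAt (fderiv ℂ (unc f)) (fderiv ℂ (fderiv ℂ (unc f)) p) p :=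
    (hfd.differentiable (by simp) p).hasFDerivAt
  have key : ∀ w' v' : E4, fderiv ℂ (fun q : E4 => fderiv ℂ (unc f) q w') p v' =
      fderiv ℂ (fderiv ℂ (unc f)) p v' w' := by
    intro w' v'
    have h := (hD.clm_apply (hasFDerivAt_const w' p)).fderiv
    rw [h]
    simp
  have hsymm := second_derivative_symmetric (fun y => (hd y).hasFDerivAt) hD v w
  calc Dv v (Dv w f) a b c d
      = fderiv ℂ (fun q : E4 => fderiv ℂ (unc f) q w) p v := rfl
    _ = fderiv ℂ (fderiv ℂ (unc f)) p v w := key w v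
    _ = fderiv ℂ (fderiv ℂ (unc f)) p w v := hsymm
    _ = fderiv ℂ (fun q : E4 => fderiv ℂ (unc f) q v) p w := (key v w).symm
    _ = Dv w (Dv v f) a b c d := rfl

end PartnerAux

open PartnerAux in
/- STATEMENT 3: the operator identity D₁L₂ − D₂L₁ = L₂D₁ − L₁D₂ on smooth
functions φ (D₁, D₂ are the derivatives in z₁, z₂, i.e. the slots 1 and 3). -/
theorem partner_operator_identity
    (lam : ℂ) (u φ : F4) (hu : Sm u) (hφ : Sm φ) :
    ∀ a b c d : ℂ,
      D1 (opL2 lam u φ) a b c d - D3 (opL1 lam u φ) a b c d =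
        opL2 lam u (D1 φ) a b c d - opL1 lam u (D3 φ) a b c d := by
  intro a b c d
  -- abbreviations for directions
  set e1 : E4 := (1, 0, 0, 0)
  set e2 : E4 := (0, 1, 0, 0)
  set e3 : E4 := (0, 0, 1, 0)
  set e4 : E4 := (0, 0, 0, 1)
  -- smoothness of iterated directional derivatives
  have hu1 : Sm (Dv e1 u) := Sm_Dv _ hu
  have hu3 : Sm (Dv e3 u) := Sm_Dv _ hu
  have hA : Sm (Dv e4 (Dv e3 u)) := Sm_Dv _ hu3
  have hC : Sm (Dv e2 (Dv e3 u)) := Sm_Dv _ hu3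
  have hA' : Sm (Dv e4 (Dv e1 u)) := Sm_Dv _ hu1
  have hC' : Sm (Dv e2 (Dv e1 u)) := Sm_Dv _ hu1
  have hB : Sm (Dv e2 φ) := Sm_Dv _ hφ
  have hE : Sm (Dv e4 φ) := Sm_Dv _ hφ
  -- rewrite the slot derivatives of u and φ in Dv form
  have h3u : D3 u = Dv e3 u := D3_eq hu
  have h1u : D1 u = Dv e1 u := D1_eq hu
  have hAeq : D4 (D3 u) = Dv e4 (Dv e3 u) := by rw [h3u]; exact D4_eq hu3
  have hCeq : D2 (D3 u) = Dv e2 (Dv e3 u) := by rw [h3u]; exact D2_eq hu3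
  have hA'eq : D4 (D1 u) = Dv e4 (Dv e1 u) := by rw [h1u]; exact D4_eq hu1
  have hC'eq : D2 (D1 u) = Dv e2 (Dv e1 u) := by rw [h1u]; exact D2_eq hu1
  have hBeq : D2 φ = Dv e2 φ := D2_eq hφ
  have hEeq : D4 φ = Dv e4 φ := D4_eq hφ
  -- derivative of the product expression defining opL2 in slot 1
  have hL2 : D1 (opL2 lam u φ) a b c d =
      lam * ((Dv e1 (Dv e4 (Dv e3 u)) a b c d * Dv e2 φ a b c d
            + Dv e4 (Dv e3 u) a b c d * Dv e1 (Dv e2 φ) a b c d)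
           - (Dv e1 (Dv e2 (Dv e3 u)) a b c d * Dv e4 φ a b c d
            + Dv e2 (Dv e3 u) a b c d * Dv e1 (Dv e4 φ) a b c d)) := by
    have h : HasDerivAt (fun t => opL2 lam u φ t b c d)
        (lam * ((Dv e1 (Dv e4 (Dv e3 u)) a b c d * Dv e2 φ a b c d
            + Dv e4 (Dv e3 u) a b c d * Dv e1 (Dv e2 φ) a b c d)
           - (Dv e1 (Dv e2 (Dv e3 u)) a b c d * Dv e4 φ a b c d
            + Dv e2 (Dv e3 u) a b c d * Dv e1 (Dv e4 φ) a b c d))) a := by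
      have h1 := (hasDeriv_slot1 hA a b c d).mul (hasDeriv_slot1 hB a b c d)
      have h2 := (hasDeriv_slot1 hC a b c d).mul (hasDeriv_slot1 hE a b c d)
      have h3 := (h1.sub h2).const_mul lam
      simp only [opL2, hAeq, hCeq, hBeq, hEeq]
      convert h3 using 1
      all_goals rfl
    exact h.deriv
  -- derivative of the product expression defining opL1 in slot 3
  have hL1 : D3 (opL1 lam u φ) a b c d =
      lam * ((Dv e3 (Dv e4 (Dv e1 u)) a b c d * Dv e2 φ a b c d
            + Dv e4 (Dv e1 u) a b c d * Dv e3 (Dv e2 φ) a b c d)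
           - (Dv e3 (Dv e2 (Dv e1 u)) a b c d * Dv e4 φ a b c d
            + Dv e2 (Dv e1 u) a b c d * Dv e3 (Dv e4 φ) a b c d)) := by
    have h : HasDerivAt (fun t => opL1 lam u φ a b t d)
        (lam * ((Dv e3 (Dv e4 (Dv e1 u)) a b c d * Dv e2 φ a b c d
            + Dv e4 (Dv e1 u) a b c d * Dv e3 (Dv e2 φ) a b c d)
           - (Dv e3 (Dv e2 (Dv e1 u)) a b c d * Dv e4 φ a b c d
            + Dv e2 (Dv e1 u) a b c d * Dv e3 (Dv e4 φ) a b c d))) c := by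
      have h1 := (hasDeriv_slot3 hA' a b c d).mul (hasDeriv_slot3 hB a b c d)
      have h2 := (hasDeriv_slot3 hC' a b c d).mul (hasDeriv_slot3 hE a b c d)
      have h3 := (h1.sub h2).const_mul lam
      simp only [opL1, hA'eq, hC'eq, hBeq, hEeq]
      convert h3 using 1
      all_goals rfl
    exact h.deriv
  -- the right-hand side in Dv form
  have hD1φ : Sm (D1 φ) := by rw [D1_eq hφ]; exact Sm_Dv _ hφ
  have hD3φ : Sm (D3 φ) := by rw [D3_eq hφ]; exact Sm_Dv _ hφ
  have hR2 : opL2 lam u (D1 φ) a b c d =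
      lam * (Dv e4 (Dv e3 u) a b c d * Dv e2 (Dv e1 φ) a b c d
           - Dv e2 (Dv e3 u) a b c d * Dv e4 (Dv e1 φ) a b c d) := by
    simp only [opL2, hAeq, hCeq]
    rw [D2_eq hD1φ, D4_eq hD1φ, D1_eq hφ]
  have hR1 : opL1 lam u (D3 φ) a b c d =
      lam * (Dv e4 (Dv e1 u) a b c d * Dv e2 (Dv e3 φ) a b c d
           - Dv e2 (Dv e1 u) a b c d * Dv e4 (Dv e3 φ) a b c d) := by
    simp only [opL1, hA'eq, hC'eq]
    rw [D2_eq hD3φ, D4_eq hD3φ, D3_eq hφ]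
  rw [hL1, hL2, hR1, hR2]
  -- commutation identities
  have c12φ : Dv e1 (Dv e2 φ) = Dv e2 (Dv e1 φ) := Dv_comm hφ e1 e2
  have c14φ : Dv e1 (Dv e4 φ) = Dv e4 (Dv e1 φ) := Dv_comm hφ e1 e4
  have c32φ : Dv e3 (Dv e2 φ) = Dv e2 (Dv e3 φ) := Dv_comm hφ e3 e2
  have c34φ : Dv e3 (Dv e4 φ) = Dv e4 (Dv e3 φ) := Dv_comm hφ e3 e4
  have cA : Dv e1 (Dv e4 (Dv e3 u)) = Dv e3 (Dv e4 (Dv e1 u)) := by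
    rw [Dv_comm hu3 e1 e4, Dv_comm hu e1 e3, Dv_comm (Sm_Dv e1 hu) e4 e3]
  have cC : Dv e1 (Dv e2 (Dv e3 u)) = Dv e3 (Dv e2 (Dv e1 u)) := by
    rw [Dv_comm hu3 e1 e2, Dv_comm hu e1 e3, Dv_comm (Sm_Dv e1 hu) e2 e3]
  rw [c12φ, c14φ, c32φ, c34φ, cA, cC]
  ring
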